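/- Let r ≤ 0 and let x : [0,∞) → ℝ be differentiable with x'(t) = r x(t) − x(t)³ for all t ≥ 0. Then x(t) → 0 as t → ∞. In other words, for r ≤ 0 the equilibrium state 0 of the pitchfork ODE attracts all orbits (it is globally asymptotically stable). -/

import Mathlib

open Set Filter

/-- For `r ≤ 0`, every forward solution of the pitchfork ODE `x' = r x - x³` on `[0, ∞)`
tends to `0` as `t → ∞`: the equilibrium `0` attracts all orbits. -/
theorem pitchfork_zero_globally_attracting (r : ℝ) (hr : r ≤ 0) (x : ℝ → ℝ)
    (hx : ∀ t ∈ Ici (0 : ℝ), HasDerivWithinAt x (r * x t - x t ^ 3) (Ici 0) t) :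
    Tendsto x atTop (nhds 0) := by
  set V : ℝ → ℝ := fun t => x t ^ 2 with hVdef
  have hV : ∀ t ∈ Ici (0 : ℝ),
      HasDerivWithinAt V (2 * x t * (r * x t - x t ^ 3)) (Ici 0) t := by
    intro t ht
    have := ((hx t ht).pow 2)
    simpa [hVdef, Pi.pow_def, mul_comm, mul_assoc, mul_left_comm] using this
  have hVcont : ContinuousOn V (Ici 0) := fun t ht => (hV t ht).continuousWithinAt
  have hVnonneg : ∀ t, 0 ≤ V t := fun t => sq_nonneg _
  -- V is antitone on Ici 0
  have hanti : AntitoneOn V (Ici 0) := by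
    apply antitoneOn_of_hasDerivWithinAt_nonpos (convex_Ici 0) hVcont
      (f' := fun t => 2 * x t * (r * x t - x t ^ 3))
    · intro t ht
      rw [interior_Ici] at ht ⊢
      exact (hV t (mem_Ici.2 (le_of_lt ht))).mono Ioi_subset_Ici_self
    · intro t ht
      nlinarith [sq_nonneg (x t), sq_nonneg (x t ^ 2)]
  -- key: for every ε > 0 there is t ≥ 0 with V t < ε
  have key : ∀ ε : ℝ, 0 < ε → ∃ t : ℝ, 0 ≤ t ∧ V t < ε := by
    intro ε hε
    by_contra h
    push_neg at h
    have hge : ∀ t : ℝ, 0 ≤ t → ε ≤ V t := fun t ht => h t ht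
    -- g t = V t + 2 ε² t is antitone on Ici 0
    set g : ℝ → ℝ := fun t => V t + 2 * ε ^ 2 * t with hgdef
    have hganti : AntitoneOn g (Ici 0) := by
      apply antitoneOn_of_hasDerivWithinAt_nonpos (convex_Ici 0)
        (f' := fun t => 2 * x t * (r * x t - x t ^ 3) + 2 * ε ^ 2)
      · exact hVcont.add (Continuous.continuousOn (by continuity))
      · intro t ht
        rw [interior_Ici] at ht ⊢
        exact ((hV t (mem_Ici.2 (le_of_lt ht))).mono Ioi_subset_Ici_self).add
          ((hasDerivWithinAt_id t _).const_mul (2 * ε ^ 2) |>.congr_deriv (by ring))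
      · intro t ht
        rw [interior_Ici] at ht
        have h1 : ε ≤ x t ^ 2 := hge t ht.le
        nlinarith [sq_nonneg (x t), hε.le]
    -- evaluate at a large time
    set T : ℝ := (V 0 + 1) / (2 * ε ^ 2) with hTdef
    have hT : 0 ≤ T := by positivity
    have := hganti (self_mem_Ici) hT hT
    have hVT : 0 ≤ V T := hVnonneg T
    have hTval : 2 * ε ^ 2 * T = V 0 + 1 := by
      rw [hTdef]; field_simp [hε.ne']
    simp only [hgdef] at this
    nlinarith
  -- conclude V → 0
  have hVtend : Tendsto V atTop (nhds 0) := by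
    rw [tendsto_order]
    constructor
    · intro a ha
      exact Eventually.of_forall fun t => lt_of_lt_of_le ha (hVnonneg t)
    · intro a ha
      obtain ⟨t0, ht0, hV0⟩ := key a ha
      filter_upwards [eventually_ge_atTop t0] with t ht
      exact lt_of_le_of_lt (hanti (mem_Ici.2 ht0) (mem_Ici.2 (ht0.trans ht)) ht) hV0
  -- from V = x² → 0 deduce x → 0
  have habs : Tendsto (fun t => |x t|) atTop (nhds 0) := by
    have : Tendsto (fun t => Real.sqrt (V t)) atTop (nhds (Real.sqrt 0)) :=
      (Real.continuous_sqrt.tendsto 0).comp hVtend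
    simpa [hVdef, Real.sqrt_sq_eq_abs] using this
  exact tendsto_zero_iff_abs_tendsto_zero x |>.2 habs
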